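/- A node i of X is a flattening point (i.e., Δ(i-1/2)·Δ(i+1/2) < 0) if and only if λ'(i-1/2)·λ'(i+1/2) < 0, where λ = λ(X,U) for any transversal parallel vector field U along X. -/

import Mathlib

noncomputable def det3 (a b c : Fin 3 → ℝ) : ℝ := Matrix.det (Matrix.of ![a, b, c])

lemma det3_expand (a b c : Fin 3 → ℝ) : det3 a b c =
    a 0 * b 1 * c 2 - a 0 * b 2 * c 1 - a 1 * b 0 * c 2 + a 1 * b 2 * c 0
    + a 2 * b 0 * c 1 - a 2 * b 1 * c 0 := by
  simp [det3, Matrix.det_fin_three]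

set_option maxHeartbeats 1000000 in
/-- node i is a flattening point iff λ'(i-1/2)·λ'(i+1/2) < 0. -/
theorem flattening_iff_lambda'_sign_change
    (X U : ℤ → Fin 3 → ℝ) (b lam : ℤ → ℝ)
    (hconv : ∀ j, 0 < det3 (X (j - 1)) (X j) (X (j + 1)))
    (htrans : ∀ j, 0 < det3 (X j) (X (j + 1)) (U j))
    (hpar : ∀ j, U (j + 1) - U j = -b j • (X (j + 1) - X j))
    (hosc : ∀ j, det3 (X (j + 1) - X j) (X (j + 1) - 2 • X j + X (j - 1))
        (-lam j • X j + U j) = 0)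
    (i : ℤ) :
    det3 (X (i + 1) - X i) (X i - X (i - 1)) (X (i - 1) - X (i - 2)) *
        det3 (X (i + 2) - X (i + 1)) (X (i + 1) - X i) (X i - X (i - 1)) < 0 ↔
      (lam i - lam (i - 1)) * (lam (i + 1) - lam i) < 0 := by
  -- λ(j) = -det(E_j, E_{j-1}, U j)/α(j)
  have hlam : ∀ j, lam j = - det3 (X (j + 1) - X j) (X j - X (j - 1)) (U j)
      / det3 (X (j - 1)) (X j) (X (j + 1)) := by
    intro j
    rw [eq_div_iff (hconv j).ne']
    have h := hosc j
    simp only [det3_expand, Pi.sub_apply, Pi.add_apply, Pi.neg_apply, Pi.smul_apply,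
      smul_eq_mul, two_smul, neg_mul] at h ⊢
    linear_combination -h
  have hα2 : ∀ j, (0:ℝ) < det3 (X j) (X (j + 1)) (X (j + 2)) := by
    intro j
    have h := hconv (j + 1)
    simpa only [show j + 1 - 1 = j by ring, show j + 1 + 1 = j + 2 by ring] using h
  -- key identity: λ(j+1) - λ(j) = Δ(j+1/2)·β(j) / (α(j)·α(j+1))
  have key : ∀ j, lam (j + 1) - lam j =
      det3 (X (j + 2) - X (j + 1)) (X (j + 1) - X j) (X j - X (j - 1)) *
        det3 (X j) (X (j + 1)) (U j) /
      (det3 (X (j - 1)) (X j) (X (j + 1)) * det3 (X j) (X (j + 1)) (X (j + 2))) := by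
    intro j
    have h1 := hlam j
    have h2 := hlam (j + 1)
    simp only [show j + 1 + 1 = j + 2 by ring, show j + 1 - 1 = j by ring] at h2
    have hU : U (j + 1) = -b j • (X (j + 1) - X j) + U j := by
      have h := hpar j
      rw [sub_eq_iff_eq_add] at h
      exact h
    rw [hU] at h2
    rw [h1, h2]
    rw [div_sub_div _ _ (hα2 j).ne' (hconv j).ne',
      div_eq_div_iff (mul_pos (hα2 j) (hconv j)).ne' (mul_pos (hconv j) (hα2 j)).ne']
    simp only [det3_expand, Pi.sub_apply, Pi.add_apply, Pi.neg_apply, Pi.smul_apply,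
      smul_eq_mul, neg_mul]
    ring
  have e1 := key (i - 1)
  simp only [show i - 1 + 1 = i by ring, show i - 1 + 2 = i + 1 by ring,
    show i - 1 - 1 = i - 2 by ring] at e1
  have e2 := key i
  rw [e1, e2]
  have hb1 := htrans (i - 1)
  simp only [show i - 1 + 1 = i by ring] at hb1
  have hb2 := htrans i
  have ha1 := hconv (i - 1)
  simp only [show i - 1 - 1 = i - 2 by ring, show i - 1 + 1 = i by ring] at ha1
  have ha2 := hconv i
  have ha3 := hα2 i
  set D1 := det3 (X (i + 1) - X i) (X i - X (i - 1)) (X (i - 1) - X (i - 2)) with hD1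
  set D2 := det3 (X (i + 2) - X (i + 1)) (X (i + 1) - X i) (X i - X (i - 1)) with hD2
  set B1 := det3 (X (i - 1)) (X i) (U (i - 1)) with hB1
  set B2 := det3 (X i) (X (i + 1)) (U i) with hB2
  set A1 := det3 (X (i - 2)) (X (i - 1)) (X i) with hA1
  set A2 := det3 (X (i - 1)) (X i) (X (i + 1)) with hA2
  set A3 := det3 (X i) (X (i + 1)) (X (i + 2)) with hA3
  have hc : (0:ℝ) < B1 * B2 / ((A1 * A2) * (A2 * A3)) := by positivity
  have hrw : D1 * B1 / (A1 * A2) * (D2 * B2 / (A2 * A3)) =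
      D1 * D2 * (B1 * B2 / ((A1 * A2) * (A2 * A3))) := by ring
  rw [hrw]
  constructor
  · intro h
    exact mul_neg_of_neg_of_pos h hc
  · intro h
    by_contra h'
    push_neg at h'
    nlinarith
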